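/- An arbitrary coproduct of flat functors in A = Fun(C, G) is flat: if (X_i)_{i ∈ I} is a family of flat functors in A, then ⊕_{i ∈ I} X_i is flat. -/

import Mathlib

set_option linter.unusedSectionVars false

open CategoryTheory CategoryTheory.Limits CategoryTheory.MonoidalCategory
  CategoryTheory.MonoidalClosed

universe v u

namespace FlatFunctorsPaper

variable {G : Type u} [Category.{v} G] [Abelian G] [MonoidalCategory G]
  [SymmetricCategory G] [MonoidalClosed G] [MonoidalPreadditive G]

/-- `X⁺ = [X, J]`, the internal hom into `J`. -/
noncomputable def pObj (J X : G) : G := (ihom X).obj J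

/-- The contravariant functorial action of `(-)⁺ = [-, J]`. -/
noncomputable def pMap (J : G) {X Y : G} (f : X ⟶ Y) : pObj J Y ⟶ pObj J X :=
  (MonoidalClosed.pre f).app J

@[simp] lemma pMap_id (J X : G) : pMap J (𝟙 X) = 𝟙 (pObj J X) := by
  simp [pMap, pObj]

@[simp] lemma pMap_comp (J : G) {X Y Z : G} (f : X ⟶ Y) (g : Y ⟶ Z) :
    pMap J (f ≫ g) = pMap J g ≫ pMap J f := by
  simp [pMap]
  rfl

@[simp] lemma pMap_zero (J : G) (X Y : G) : pMap J (0 : X ⟶ Y) = 0 := by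
  apply MonoidalClosed.uncurry_injective
  unfold pObj
  rw [pMap, MonoidalClosed.uncurry_pre, MonoidalClosed.uncurry_eq]
  simp

/-- The canonical biduality morphism `X ⟶ X⁺⁺` in `G`. -/
noncomputable def bid (J X : G) : X ⟶ pObj J (pObj J X) :=
  MonoidalClosed.curry ((β_ (pObj J X) X).hom ≫ (ihom.ev X).app J)

lemma bid_natural (J : G) {X Y : G} (f : X ⟶ Y) :
    f ≫ bid J Y = bid J X ≫ pMap J (pMap J f) := by
  unfold bid pMap pObj
  apply MonoidalClosed.uncurry_injective
  rw [MonoidalClosed.uncurry_natural_left, MonoidalClosed.uncurry_natural_left]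
  rw [MonoidalClosed.uncurry_curry, MonoidalClosed.uncurry_pre]
  rw [whisker_exchange_assoc]
  rw [← MonoidalClosed.uncurry_eq, MonoidalClosed.uncurry_curry]
  simp

section Dual

variable {D : Type v} [SmallCategory D]

/-- The objectwise dual `F⁺` of a functor `F : D ⥤ G`, a functor `Dᵒᵖ ⥤ G`. -/
@[simps] noncomputable def dObj (J : G) (F : D ⥤ G) : Dᵒᵖ ⥤ G where
  obj c := pObj J (F.obj c.unop)
  map f := pMap J (F.map f.unop)
  map_id c := by simp
  map_comp f g := by simp

/-- The dual of a natural transformation. -/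
@[simps] noncomputable def dMap (J : G) {F F' : D ⥤ G} (η : F ⟶ F') :
    dObj J F' ⟶ dObj J F where
  app c := pMap J (η.app c.unop)
  naturality _ _ f := by
    show pMap J (F'.map f.unop) ≫ pMap J _ = pMap J _ ≫ pMap J (F.map f.unop)
    rw [← pMap_comp, ← pMap_comp, NatTrans.naturality]

@[simp] lemma dMap_id (J : G) (F : D ⥤ G) : dMap J (𝟙 F) = 𝟙 (dObj J F) := by
  ext c; simp; rfl

@[simp] lemma dMap_comp (J : G) {F F' F'' : D ⥤ G} (α : F ⟶ F') (β : F' ⟶ F'') :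
    dMap J (α ≫ β) = dMap J β ≫ dMap J α := by
  ext c; simp; rfl

@[simp] lemma dMap_zero (J : G) (F F' : D ⥤ G) : dMap J (0 : F ⟶ F') = 0 := by
  ext c; simp; rfl

/-- The double dual `F⁺⁺` of a functor `F : D ⥤ G`. -/
noncomputable def ddObj (J : G) (F : D ⥤ G) : D ⥤ G := opOp D ⋙ dObj J (dObj J F)

/-- The canonical natural transformation `φ_F : F ⟶ F⁺⁺`. -/
noncomputable def phi (J : G) (F : D ⥤ G) : F ⟶ ddObj J F where
  app c := bid J (F.obj c)
  naturality _ _ f := bid_natural J (F.map f)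

/-- The dual of a short exact sequence (short complex) of functors. -/
noncomputable def dSC (J : G) (S : ShortComplex (D ⥤ G)) : ShortComplex (Dᵒᵖ ⥤ G) :=
  ShortComplex.mk (dMap J S.g) (dMap J S.f) (by rw [← dMap_comp, S.zero, dMap_zero])

/-- A short exact sequence of functors is *pure* if its dual splits. -/
def IsPure (J : G) (S : ShortComplex (D ⥤ G)) : Prop := Nonempty ((dSC J S).Splitting)

/-- A functor `F` is *flat* if every short exact sequence ending in `F` is pure. -/
def IsFlat (J : G) (F : D ⥤ G) : Prop :=
  ∀ ⦃K E : D ⥤ G⦄ (i : K ⟶ E) (p : E ⟶ F) (w : i ≫ p = 0),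
    (ShortComplex.mk i p w).ShortExact → IsPure J (ShortComplex.mk i p w)

/-- A functor `X` is *cotorsion* if every short exact sequence `0 → X → E → F → 0`
with `F` flat splits. -/
def IsCotorsion (J : G) (X : D ⥤ G) : Prop :=
  ∀ ⦃E F : D ⥤ G⦄ (i : X ⟶ E) (p : E ⟶ F) (w : i ≫ p = 0),
    (ShortComplex.mk i p w).ShortExact → IsFlat J F →
      Nonempty (ShortComplex.mk i p w).Splitting

/-- A functor `P` is *pure injective* if every morphism into `P` extends along
pure monomorphisms. -/
def IsPureInjective (J : G) (P : D ⥤ G) : Prop :=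
  ∀ ⦃K E L : D ⥤ G⦄ (i : K ⟶ E) (p : E ⟶ L) (w : i ≫ p = 0),
    (ShortComplex.mk i p w).ShortExact → IsPure J (ShortComplex.mk i p w) →
      ∀ f : K ⟶ P, ∃ h : E ⟶ P, i ≫ h = f

end Dual

section ObjectLevel

/-- The dual of a short exact sequence (short complex) in `G`. -/
noncomputable def dSCG (J : G) (S : ShortComplex G) : ShortComplex G :=
  ShortComplex.mk (pMap J S.g) (pMap J S.f) (by rw [← pMap_comp, S.zero, pMap_zero])

/-- A short exact sequence in `G` is *pure* if its dual splits. -/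
def IsPureG (J : G) (S : ShortComplex G) : Prop := Nonempty ((dSCG J S).Splitting)

/-- An object `X` of `G` is *flat* if every short exact sequence ending in `X` is pure. -/
def IsFlatG (J X : G) : Prop :=
  ∀ ⦃K E : G⦄ (i : K ⟶ E) (p : E ⟶ X) (w : i ≫ p = 0),
    (ShortComplex.mk i p w).ShortExact → IsPureG J (ShortComplex.mk i p w)

/-- An object `X` of `G` is *cotorsion* if every short exact sequence
`0 → X → E → F → 0` with `F` flat splits. -/
def IsCotorsionG (J X : G) : Prop :=
  ∀ ⦃E F : G⦄ (i : X ⟶ E) (p : E ⟶ F) (w : i ≫ p = 0),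
    (ShortComplex.mk i p w).ShortExact → IsFlatG J F →
      Nonempty (ShortComplex.mk i p w).Splitting

/-- The flat objects and the cotorsion objects form a complete cotorsion theory in `G`:
every object has a special flat precover and a special cotorsion preenvelope. -/
def CompleteFlatCotorsionTheoryG (J : G) : Prop :=
  ∀ X : G,
    (∃ (Cx F : G) (i : Cx ⟶ F) (p : F ⟶ X) (w : i ≫ p = 0),
      (ShortComplex.mk i p w).ShortExact ∧ IsFlatG J F ∧ IsCotorsionG J Cx) ∧
    (∃ (Cx F : G) (i : X ⟶ Cx) (p : Cx ⟶ F) (w : i ≫ p = 0),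
      (ShortComplex.mk i p w).ShortExact ∧ IsCotorsionG J Cx ∧ IsFlatG J F)

end ObjectLevel

section Complexes

variable {D : Type v} [SmallCategory D]

/-- A *flat complex*: an acyclic complex of flat functors all of whose kernels of
differentials are flat (equivalently, a pure acyclic complex of flat functors). -/
def IsFlatComplex (J : G) (X : CochainComplex (D ⥤ G) ℤ) : Prop :=
  (∀ n, X.ExactAt n) ∧ (∀ n, IsFlat J (X.X n)) ∧
    ∀ n : ℤ, IsFlat J (kernel (X.d n (n + 1)))

/-- A *cotorsion complex*: an acyclic complex of cotorsion functors all of whose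
kernels of differentials are cotorsion. -/
def IsCotorsionComplex (J : G) (X : CochainComplex (D ⥤ G) ℤ) : Prop :=
  (∀ n, X.ExactAt n) ∧ (∀ n, IsCotorsion J (X.X n)) ∧
    ∀ n : ℤ, IsCotorsion J (kernel (X.d n (n + 1)))

/-- A complex is *dg-cotorsion* if every short exact sequence of complexes
`0 → X → E → F → 0` with `F` a flat complex splits. -/
def IsDgCotorsion (J : G) (X : CochainComplex (D ⥤ G) ℤ) : Prop :=
  ∀ ⦃E F : CochainComplex (D ⥤ G) ℤ⦄ (i : X ⟶ E) (p : E ⟶ F) (w : i ≫ p = 0),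
    (ShortComplex.mk i p w).ShortExact → IsFlatComplex J F →
      Nonempty (ShortComplex.mk i p w).Splitting

end Complexes



section ObjectFlip

variable (J : G)

/-- Flip a morphism `X ⟶ [Y, J]` into a morphism `Y ⟶ [X, J]`. -/
noncomputable def pFlip {X Y : G} (f : X ⟶ pObj J Y) : Y ⟶ pObj J X :=
  MonoidalClosed.curry ((β_ X Y).hom ≫ MonoidalClosed.uncurry f)

lemma uncurry_pFlip {X Y : G} (f : X ⟶ pObj J Y) :
    MonoidalClosed.uncurry (pFlip J f) = (β_ X Y).hom ≫ MonoidalClosed.uncurry f :=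
  MonoidalClosed.uncurry_curry _

lemma pFlip_pFlip {X Y : G} (f : X ⟶ pObj J Y) : pFlip J (pFlip J f) = f := by
  apply MonoidalClosed.uncurry_injective
  rw [uncurry_pFlip, uncurry_pFlip, ← Category.assoc, SymmetricCategory.symmetry,
    Category.id_comp]

lemma pFlip_id (X : G) : pFlip J (𝟙 (pObj J X)) = bid J X := by
  dsimp only [pFlip, bid, pObj]
  rw [MonoidalClosed.uncurry_id_eq_ev]
  rfl

lemma uncurry_add {X Y : G} (f g : X ⟶ pObj J Y) :
    MonoidalClosed.uncurry (f + g) = MonoidalClosed.uncurry f + MonoidalClosed.uncurry g := by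
  unfold pObj at f g ⊢
  rw [MonoidalClosed.uncurry_eq, MonoidalClosed.uncurry_eq, MonoidalClosed.uncurry_eq,
    MonoidalPreadditive.whiskerLeft_add, Preadditive.add_comp]

lemma pFlip_add {X Y : G} (f g : X ⟶ pObj J Y) :
    pFlip J (f + g) = pFlip J f + pFlip J g := by
  apply MonoidalClosed.uncurry_injective
  rw [uncurry_pFlip, uncurry_add, uncurry_add, uncurry_pFlip, uncurry_pFlip,
    Preadditive.comp_add]

lemma uncurry_comp_pMap {X X' Y : G} (g : Y ⟶ pObj J X) (a : X' ⟶ X) :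
    MonoidalClosed.uncurry (g ≫ pMap J a) = (a ▷ Y) ≫ MonoidalClosed.uncurry g := by
  erw [MonoidalClosed.uncurry_eq, MonoidalCategory.whiskerLeft_comp, Category.assoc, pMap,
    MonoidalClosed.id_tensor_pre_app_comp_ev]
  erw [whisker_exchange_assoc]
  congr 1

lemma pFlip_comp_left {X X' Y : G} (a : X' ⟶ X) (f : X ⟶ pObj J Y) :
    pFlip J (a ≫ f) = pFlip J f ≫ pMap J a := by
  apply MonoidalClosed.uncurry_injective
  exact (uncurry_pFlip J (a ≫ f)).trans
    ((congrArg ((β_ X' Y).hom ≫ ·) (MonoidalClosed.uncurry_natural_left a f)).trans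
    ((BraidedCategory.braiding_naturality_left_assoc a Y _).symm.trans
    ((congrArg (a ▷ Y ≫ ·) (uncurry_pFlip J f).symm).trans
    (uncurry_comp_pMap J (pFlip J f) a).symm)))

lemma pFlip_comp_pMap {X Y Y' : G} (b : Y ⟶ Y') (f : X ⟶ pObj J Y') :
    pFlip J (f ≫ pMap J b) = b ≫ pFlip J f := by
  have h := pFlip_comp_left J b (pFlip J f)
  rw [pFlip_pFlip] at h
  rw [← h, pFlip_pFlip]

end ObjectFlip

section FlipDual

variable {D : Type v} [SmallCategory D]

/-- The dual of a contravariant functor, as a covariant functor. -/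
noncomputable abbrev flipDual (J : G) (T : Dᵒᵖ ⥤ G) : D ⥤ G := opOp D ⋙ dObj J T

/-- Functoriality of `flipDual`. -/
noncomputable abbrev flipDualMap (J : G) {T T' : Dᵒᵖ ⥤ G} (β : T ⟶ T') :
    flipDual J T' ⟶ flipDual J T :=
  Functor.whiskerLeft (opOp D) (dMap J β)

/-- The self-adjunction of objectwise duality at the level of functor categories. -/
noncomputable def dualEquiv (J : G) {T : Dᵒᵖ ⥤ G} {F : D ⥤ G} :
    (T ⟶ dObj J F) ≃ (F ⟶ flipDual J T) where
  toFun η :=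
    { app := fun c => pFlip J (η.app (Opposite.op c))
      naturality := fun c c' f => by
        dsimp
        have h := η.naturality f.op
        exact (pFlip_comp_pMap J (F.map f) (η.app (Opposite.op c'))).symm.trans
          ((congrArg (pFlip J) h.symm).trans (pFlip_comp_left J (T.map f.op) (η.app (Opposite.op c)))) }
  invFun θ :=
    { app := fun x => pFlip J (θ.app x.unop)
      naturality := fun x y g => by
        have h := θ.naturality g.unop
        exact (pFlip_comp_pMap J (T.map g) (θ.app y.unop)).symm.trans
          ((congrArg (pFlip J) h.symm).trans (pFlip_comp_left J (F.map g.unop) (θ.app x.unop))) }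
  left_inv η := by
    ext x
    exact pFlip_pFlip J _
  right_inv θ := by
    ext c
    exact pFlip_pFlip J _

lemma dualEquiv_id (J : G) (F : D ⥤ G) : dualEquiv J (𝟙 (dObj J F)) = phi J F := by
  ext c
  exact pFlip_id J (F.obj c)

lemma dualEquiv_comp_dMap (J : G) {T : Dᵒᵖ ⥤ G} {F F' : D ⥤ G} (η : T ⟶ dObj J F')
    (α : F ⟶ F') : dualEquiv J (η ≫ dMap J α) = α ≫ dualEquiv J η := by
  ext c
  dsimp [dualEquiv]
  exact pFlip_comp_pMap J _ _

lemma dualEquiv_precomp (J : G) {T T' : Dᵒᵖ ⥤ G} {F : D ⥤ G} (β : T ⟶ T')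
    (η : T' ⟶ dObj J F) :
    dualEquiv J (β ≫ η) = dualEquiv J η ≫ flipDualMap J β := by
  ext c
  dsimp [dualEquiv]
  exact pFlip_comp_left J _ _

lemma dualEquiv_add (J : G) {T : Dᵒᵖ ⥤ G} {F : D ⥤ G} (η η' : T ⟶ dObj J F) :
    dualEquiv J (η + η') = dualEquiv J η + dualEquiv J η' := by
  ext c
  dsimp [dualEquiv]
  exact pFlip_add J _ _

end FlipDual

section Glue

variable {A : Type*} [Category A] [Abelian A] {I : Type*}
  [HasColimitsOfShape (Discrete I) A]
  [PreservesLimitsOfShape WalkingParallelPair (colim (J := Discrete I) (C := A))]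

/-- Gluing lemma: a compatible family of maps on the "partial pullbacks" of a short exact
sequence ending in a coproduct glues to a map on the middle object. -/
lemma glue {K M T : A} {PB X : I → A} (i : K ⟶ M) [Mono i] (p : M ⟶ ∐ X)
    (q : ∀ j, PB j ⟶ M) (p' : ∀ j, PB j ⟶ X j) (k : ∀ j, K ⟶ PB j)
    (hkq : ∀ j, k j ≫ q j = i) (hkp : ∀ j, k j ≫ p' j = 0)
    (hker : ∀ j, IsLimit (KernelFork.ofι (k j) (hkp j)))
    (hqp : ∀ j, q j ≫ p = p' j ≫ Sigma.ι X j)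
    (hepi : Epi (Sigma.desc q))
    (ζf : ∀ j, PB j ⟶ T) (φ : K ⟶ T) (hζ : ∀ j, k j ≫ ζf j = φ) :
    ∃ ζ : M ⟶ T, ∀ j, q j ≫ ζ = ζf j := by
  classical
  have hmonok : ∀ j, Mono (k j) := fun j => by
    have h : Mono (k j ≫ q j) := by rw [hkq]; infer_instance
    exact mono_of_mono (k j) (q j)
  let Kd : Discrete I ⥤ A := Discrete.functor fun _ => K
  let PBd : Discrete I ⥤ A := Discrete.functor PB
  let Xd : Discrete I ⥤ A := Discrete.functor X
  let κn : Kd ⟶ PBd := Discrete.natTrans fun j => k j.as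
  let πn : PBd ⟶ Xd := Discrete.natTrans fun j => p' j.as
  have wn : κn ≫ πn = 0 := by
    ext j
    simp [κn, πn, hkp]
  have hlift : ∀ {W' : Discrete I ⥤ A} (t : W' ⟶ PBd), t ≫ πn = 0 →
      ∀ j : Discrete I, { l : W'.obj j ⟶ K // l ≫ k j.as = t.app j } := by
    intro W' t ht j
    refine KernelFork.IsLimit.lift' (hker j.as) (t.app j) ?_
    have h := congrArg (fun z : W' ⟶ Xd => z.app j) ht
    simpa [πn] using h
  have hn : IsLimit (KernelFork.ofι κn wn) := by
    refine KernelFork.IsLimit.ofι _ _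
      (fun {W'} t ht => Discrete.natTrans fun j => (hlift t ht j).1) ?_ ?_
    · intro W' t ht
      ext j
      exact (hlift t ht j).2
    · intro W' t ht m hm
      ext j
      have := hmonok j.as
      have h5 := congrArg (fun z : W' ⟶ PBd => z.app j) hm
      dsimp only [κn, NatTrans.comp_app, Discrete.natTrans_app] at h5
      apply (cancel_mono (k j.as)).1
      dsimp only [Discrete.natTrans_app]
      rw [(hlift t ht j).2, h5]
  have hbig : IsLimit (KernelFork.ofι (colim.map κn)
      (by rw [← Functor.map_comp, wn, Functor.map_zero]) : Fork (colim.map πn) 0) :=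
    isLimitForkMapOfIsLimit' colim wn hn
  let u : (∐ PB) ⟶ M := Sigma.desc q
  have hup : u ≫ p = colim.map πn := by
    apply colimit.hom_ext
    rintro ⟨j⟩
    rw [colimit.ι_map]
    simp [u, hqp j, πn, Xd]
  have hkerw : kernel.ι u ≫ colim.map πn = 0 := by
    rw [← hup, kernel.condition_assoc, zero_comp]
  obtain ⟨ρ, hρ⟩ := KernelFork.IsLimit.lift' hbig (kernel.ι u) hkerw
  simp only [Fork.ι_ofι] at hρ
  let fold : (∐ fun _ : I => K) ⟶ K := Sigma.desc fun _ => 𝟙 K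
  have hκu : colim.map κn ≫ u = fold ≫ i := by
    apply colimit.hom_ext
    rintro ⟨j⟩
    rw [colimit.ι_map_assoc]
    simp only [u, fold, κn, PBd, Kd, Discrete.natTrans_app, colimit.ι_desc_assoc, colimit.ι_desc,
      Cofan.mk_pt, Cofan.mk_ι_app, Category.id_comp]
    rw [hkq j]
    exact (Category.id_comp _).symm
  have hfold : ρ ≫ fold = 0 := by
    rw [← cancel_mono i, Category.assoc, zero_comp, ← hκu, ← Category.assoc, hρ,
      kernel.condition]
  have hκζ : colim.map κn ≫ Sigma.desc ζf = fold ≫ φ := by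
    apply colimit.hom_ext
    rintro ⟨j⟩
    rw [colimit.ι_map_assoc]
    simp only [fold, κn, PBd, Kd, Discrete.natTrans_app, colimit.ι_desc_assoc, colimit.ι_desc,
      Cofan.mk_pt, Cofan.mk_ι_app, Category.id_comp]
    rw [hζ j]
    exact (Category.id_comp _).symm
  have hkerζ : kernel.ι u ≫ Sigma.desc ζf = 0 := by
    rw [← hρ, Category.assoc, hκζ, ← Category.assoc, hfold, zero_comp]
  haveI : Epi u := hepi
  refine ⟨Abelian.epiDesc u (Sigma.desc ζf) hkerζ, fun j => ?_⟩
  have h1 : Sigma.ι PB j ≫ u = q j := by simp [u]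
  have h2 := Abelian.comp_epiDesc u (Sigma.desc ζf) hkerζ
  rw [← h1, Category.assoc, h2]
  simp

end Glue


section Statement

variable {C : Type v} [SmallCategory C]
variable [HasLimits G] [HasColimits G] [AB5 G] [HasSeparator G]


/-- An arbitrary coproduct of flat functors in `A = Fun(C, G)` is flat. -/
theorem statement7 (J : G) [Injective J] (hJ : IsCoseparator J)
    {I : Type v} (X : I → (C ⥤ G)) (hX : ∀ i : I, IsFlat J (X i)) :
    IsFlat J (∐ X) := by
  intro K E i p w hSE
  haveI := hSE.mono_f
  haveI := hSE.epi_g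
  rcases isEmpty_or_nonempty I with hI | hI
  · -- empty index type: the coproduct is zero and `i` is an isomorphism
    have hz : IsZero (∐ X) := by
      rw [IsZero.iff_id_eq_zero]
      apply colimit.hom_ext
      rintro ⟨j⟩
      exact hI.elim j
    have hp0 : p = 0 := hz.eq_of_tgt p 0
    haveI : Epi i := hSE.exact.epi_f hp0
    haveI : IsIso i := isIso_of_mono_of_epi i
    have hgiso : IsIso (dMap J i) := by
      refine ⟨dMap J (inv i), ?_, ?_⟩
      · rw [← dMap_comp, IsIso.inv_hom_id, dMap_id]
      · rw [← dMap_comp, IsIso.hom_inv_id, dMap_id]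
    have hz1 : IsZero (dObj J (∐ X)) := by
      rw [IsZero.iff_id_eq_zero]
      calc 𝟙 (dObj J (∐ X)) = dMap J (𝟙 (∐ X)) := (dMap_id J _).symm
        _ = dMap J 0 := by rw [hz.eq_of_src (𝟙 (∐ X)) 0]
        _ = 0 := dMap_zero J _ _
    exact ⟨ShortComplex.Splitting.ofIsZeroOfIsIso _ hz1 hgiso⟩
  · obtain ⟨i₀⟩ := hI
    -- instances for exact coproducts in the functor category
    haveI : HasFiniteBiproducts G := Limits.HasFiniteBiproducts.of_hasFiniteProducts
    letI : AB4 G := AB4.of_AB5 G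
    haveI : PreservesLimitsOfShape WalkingParallelPair
        (colim (J := Discrete I) (C := C ⥤ G)) := inferInstance
    -- the pullback data
    set PB : I → (C ⥤ G) := fun j => pullback p (Sigma.ι X j) with hPB
    set q : ∀ j, PB j ⟶ E := fun j => pullback.fst p (Sigma.ι X j) with hq
    set p' : ∀ j, PB j ⟶ X j := fun j => pullback.snd p (Sigma.ι X j) with hp'
    haveI hpe : ∀ j, Epi (p' j) := fun j => by
      rw [hp']
      infer_instance
    have hwk : ∀ j : I, i ≫ p = 0 ≫ Sigma.ι X j := fun j => by rw [w, zero_comp]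
    set k : ∀ j, K ⟶ PB j := fun j => pullback.lift i 0 (hwk j) with hk
    have hkq : ∀ j, k j ≫ q j = i := fun j => pullback.lift_fst _ _ _
    have hkp : ∀ j, k j ≫ p' j = 0 := fun j => pullback.lift_snd _ _ _
    have hqp : ∀ j, q j ≫ p = p' j ≫ Sigma.ι X j := fun j => pullback.condition
    have hik : IsLimit (KernelFork.ofι i w) := hSE.exact.fIsKernel
    have hmonok : ∀ j, Mono (k j) := fun j => by
      have h : Mono (k j ≫ q j) := by rw [hkq]; infer_instance
      exact mono_of_mono (k j) (q j)
    have hker : ∀ j, IsLimit (KernelFork.ofι (k j) (hkp j)) := fun j => by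
      haveI := hmonok j
      refine KernelFork.IsLimit.ofι' _ _ (fun {Z} t ht => ?_)
      have h2 : (t ≫ q j) ≫ p = 0 := by
        rw [Category.assoc, hqp j, ← Category.assoc, ht, zero_comp]
      obtain ⟨z, hz⟩ := KernelFork.IsLimit.lift' hik (t ≫ q j) h2
      simp only [Fork.ι_ofι] at hz
      refine ⟨z, ?_⟩
      apply pullback.hom_ext
      · rw [Category.assoc]
        change z ≫ k j ≫ q j = t ≫ q j
        rw [hkq, hz]
      · rw [Category.assoc]
        change z ≫ k j ≫ p' j = t ≫ p' j
        rw [hkp, comp_zero, ht]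
    have hSEj : ∀ j, (ShortComplex.mk (k j) (p' j) (hkp j)).ShortExact := fun j => by
      haveI := hmonok j
      haveI := hpe j
      exact { exact := ShortComplex.exact_of_f_is_kernel _ (hker j) }
    -- the splittings of the duals of the pullback rows
    have hsplit : ∀ j, (dSC J (ShortComplex.mk (k j) (p' j) (hkp j))).Splitting := fun j =>
      (hX j (k j) (p' j) (hkp j) (hSEj j)).some
    -- r and s data extracted from the splittings
    let rr : ∀ j, dObj J (PB j) ⟶ dObj J (X j) := fun j => (hsplit j).r
    let ss : ∀ j, dObj J K ⟶ dObj J (PB j) := fun j => (hsplit j).s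
    have hfr' : ∀ j, dMap J (p' j) ≫ rr j = 𝟙 (dObj J (X j)) := fun j => (hsplit j).f_r
    have hsg' : ∀ j, ss j ≫ dMap J (k j) = 𝟙 (dObj J K) := fun j => (hsplit j).s_g
    have hid' : ∀ j, rr j ≫ dMap J (p' j) + dMap J (k j) ≫ ss j
        = 𝟙 (dObj J (PB j)) := fun j => (hsplit j).id
    -- the q j are jointly epic
    have hjoint : ∀ {W : C ⥤ G} (v : E ⟶ W), (∀ j, q j ≫ v = 0) → v = 0 := by
      intro W v hv
      have hiv : i ≫ v = 0 := by rw [← hkq i₀, Category.assoc, hv i₀, comp_zero]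
      obtain ⟨ψ, hψ⟩ := CokernelCofork.IsColimit.desc' hSE.exact.gIsCokernel v hiv
      simp only [Cofork.π_ofπ] at hψ
      have hψ0 : ψ = 0 := by
        apply colimit.hom_ext (F := Discrete.functor X)
        rintro ⟨j⟩
        rw [comp_zero]
        have h3 : p' j ≫ Sigma.ι X j ≫ ψ = p' j ≫ 0 := by
          rw [comp_zero, ← Category.assoc, ← hqp j, Category.assoc, hψ, hv j]
        exact (cancel_epi (p' j)).1 h3
      rw [← hψ, hψ0, comp_zero]
    have hepiu : Epi (Sigma.desc q) := by
      refine ⟨fun {W} a b hab => ?_⟩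
      rw [← sub_eq_zero]
      apply hjoint
      intro j
      have h4 := congrArg (fun z : (∐ PB) ⟶ W => Sigma.ι PB j ≫ z) hab
      simp only [colimit.ι_desc_assoc] at h4
      dsimp at h4
      rw [Preadditive.comp_sub]
      rw [show q j ≫ a = q j ≫ b from h4]
      rw [sub_self]
    -- glue the sections of the duals of the pullback rows
    have hcompat : ∀ j, k j ≫ dualEquiv J (ss j) = phi J K := fun j => by
      rw [← dualEquiv_comp_dMap, hsg', dualEquiv_id]
    obtain ⟨ζ, hζ⟩ := glue i p q p' k hkq hkp hker hqp hepiu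
      (fun j => dualEquiv J (ss j)) (phi J K) hcompat
    -- the retraction
    set δ : (∐ X) ⟶ flipDual J (dObj J E) :=
      Sigma.desc (fun j => dualEquiv J (dMap J (q j) ≫ rr j)) with hδ
    set r : dObj J E ⟶ dObj J (∐ X) := (dualEquiv J).symm δ with hr
    set s : dObj J K ⟶ dObj J E := (dualEquiv J).symm ζ with hs
    have heqr : dualEquiv J r = δ := by rw [hr, Equiv.apply_symm_apply]
    have heqs : dualEquiv J s = ζ := by rw [hs, Equiv.apply_symm_apply]
    have hfr : dMap J p ≫ r = 𝟙 (dObj J (∐ X)) := by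
      apply (dualEquiv J).injective
      rw [dualEquiv_precomp, heqr, dualEquiv_id]
      apply colimit.hom_ext
      rintro ⟨j⟩
      rw [colimit.ι_desc_assoc]
      dsimp only [Cofan.mk_ι_app]
      rw [← dualEquiv_precomp J (dMap J p) (dMap J (q j) ≫ rr j), ← Category.assoc,
        ← dMap_comp, hqp j, dMap_comp,
        Category.assoc, hfr', Category.comp_id,
        show dMap J (Sigma.ι X j) = 𝟙 (dObj J (∐ X)) ≫ dMap J (Sigma.ι X j) from
          (Category.id_comp _).symm,
        dualEquiv_comp_dMap, dualEquiv_id]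
    have hsg : s ≫ dMap J i = 𝟙 (dObj J K) := by
      apply (dualEquiv J).injective
      rw [dualEquiv_comp_dMap, heqs, dualEquiv_id, ← hkq i₀, Category.assoc, hζ i₀,
        hcompat i₀]
    have hid : r ≫ dMap J p + dMap J i ≫ s = 𝟙 (dObj J E) := by
      apply (dualEquiv J).injective
      rw [dualEquiv_add, dualEquiv_comp_dMap, heqr, dualEquiv_precomp, heqs, dualEquiv_id]
      erw [← sub_eq_zero]
      apply hjoint
      intro j
      erw [Preadditive.comp_sub, Preadditive.comp_add, ← Category.assoc (q j) p δ, hqp j,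
        Category.assoc, hδ, colimit.ι_desc]
      dsimp only [Cofan.mk_ι_app]
      rw [← dualEquiv_comp_dMap, ← Category.assoc (q j) ζ _, hζ j,
        ← dualEquiv_precomp J (dMap J i) (ss j),
        ← dualEquiv_add, ← hkq j, dMap_comp, Category.assoc, Category.assoc,
        ← Preadditive.comp_add, hid' j, Category.comp_id,
        show dMap J (q j) = 𝟙 (dObj J E) ≫ dMap J (q j) from (Category.id_comp _).symm,
        dualEquiv_comp_dMap, dualEquiv_id, sub_self]
    exact ⟨{ r := r, s := s, f_r := hfr, s_g := hsg, id := hid }⟩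


end Statement

end FlatFunctorsPaper
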